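/- Let 𝒬 be a probability distribution on real m×k matrices such that E_{Q∼𝒬}[Q Qᵀ] = I (the m×m identity) and such that the entries of Q Qᵀ Q Qᵀ are integrable, and let ω ≥ 0. Then the following are equivalent: (i) for every g ∈ ℝᵐ, E_{Q∼𝒬}[‖g − Q Qᵀ g‖²] ≤ ω‖g‖²; (ii) ‖E_{Q∼𝒬}[Q Qᵀ Q Qᵀ]‖ ≤ ω + 1, where ‖·‖ denotes the operator norm on m×m real matrices. -/

import Mathlib

open Matrix MeasureTheory

/-- The operator norm on `m × m` real matrices induced by the Euclidean norm. -/
noncomputable def opNorm {m : ℕ} (A : Matrix (Fin m) (Fin m) ℝ) : ℝ :=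
  ‖Matrix.toEuclideanCLM (𝕜 := ℝ) (n := Fin m) A‖

section Aux

variable {α : Type*} [MeasurableSpace α] {μ : Measure α} {m : ℕ}

lemma aux_integrable_dot (A : α → Matrix (Fin m) (Fin m) ℝ)
    (hA : ∀ i j, Integrable (fun a => A a i j) μ) (x y : Fin m → ℝ) :
    Integrable (fun a => x ⬝ᵥ (A a *ᵥ y)) μ := by
  have h1 : (fun a => x ⬝ᵥ (A a *ᵥ y)) =
      fun a => ∑ i, ∑ j, x i * (A a i j * y j) := by
    funext a
    simp [dotProduct, Matrix.mulVec, Finset.mul_sum]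
  rw [h1]
  refine integrable_finset_sum _ fun i _ => integrable_finset_sum _ fun j _ => ?_
  exact ((hA i j).mul_const (y j)).const_mul (x i)

lemma aux_integral_dot (A : α → Matrix (Fin m) (Fin m) ℝ)
    (hA : ∀ i j, Integrable (fun a => A a i j) μ) (x y : Fin m → ℝ) :
    ∫ a, x ⬝ᵥ (A a *ᵥ y) ∂μ = x ⬝ᵥ ((Matrix.of fun i j => ∫ a, A a i j ∂μ) *ᵥ y) := by
  have h1 : (fun a => x ⬝ᵥ (A a *ᵥ y)) =
      fun a => ∑ i, ∑ j, x i * (A a i j * y j) := by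
    funext a
    simp [dotProduct, Matrix.mulVec, Finset.mul_sum]
  rw [h1, integral_finset_sum]
  · have : ∀ i : Fin m, ∫ a, ∑ j, x i * (A a i j * y j) ∂μ =
        ∑ j, x i * ((∫ a, A a i j ∂μ) * y j) := by
      intro i
      rw [integral_finset_sum]
      · refine Finset.sum_congr rfl fun j _ => ?_
        rw [integral_const_mul, integral_mul_const]
      · exact fun j _ => ((hA i j).mul_const (y j)).const_mul (x i)
    simp only [this]
    simp [dotProduct, Matrix.mulVec, Finset.mul_sum, Matrix.of_apply]
  · exact fun i _ => integrable_finset_sum _ fun j _ =>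
      ((hA i j).mul_const (y j)).const_mul (x i)

lemma aux_inner_eq_dot (u v : EuclideanSpace ℝ (Fin m)) :
    (inner ℝ u v : ℝ) = (WithLp.equiv 2 (Fin m → ℝ) u) ⬝ᵥ (WithLp.equiv 2 (Fin m → ℝ) v) := by
  simp [PiLp.inner_apply, RCLike.inner_apply, dotProduct, conj_trivial, mul_comm]

lemma aux_inner_toEuclideanLin (B : Matrix (Fin m) (Fin m) ℝ) (u v : EuclideanSpace ℝ (Fin m)) :
    (inner ℝ u (Matrix.toEuclideanLin B v) : ℝ) =
      (WithLp.equiv 2 (Fin m → ℝ) u) ⬝ᵥ (B *ᵥ (WithLp.equiv 2 (Fin m → ℝ) v)) := by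
  rw [aux_inner_eq_dot]
  simp [Matrix.toEuclideanLin_apply]

lemma aux_norm_toEuclideanLin_sq (B : Matrix (Fin m) (Fin m) ℝ) (hB : Bᵀ = B)
    (g : EuclideanSpace ℝ (Fin m)) :
    ‖Matrix.toEuclideanLin B g‖ ^ 2 =
      (WithLp.equiv 2 (Fin m → ℝ) g) ⬝ᵥ ((B * B) *ᵥ (WithLp.equiv 2 (Fin m → ℝ) g)) := by
  rw [← real_inner_self_eq_norm_sq, aux_inner_eq_dot]
  set g' := WithLp.equiv 2 (Fin m → ℝ) g
  have h1 : WithLp.equiv 2 (Fin m → ℝ) (Matrix.toEuclideanLin B g) = B *ᵥ g' := by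
    simp [Matrix.toEuclideanLin_apply]
    rfl
  have hv : g' ᵥ* B = B *ᵥ g' := by
    nth_rewrite 1 [← hB]
    exact Matrix.vecMul_transpose B g'
  rw [h1]
  conv_rhs => rw [← Matrix.mulVec_mulVec, dotProduct_mulVec, hv]

lemma aux_norm_sub_sq (B : Matrix (Fin m) (Fin m) ℝ) (hB : Bᵀ = B)
    (g : EuclideanSpace ℝ (Fin m)) :
    ‖g - Matrix.toEuclideanLin B g‖ ^ 2 =
      (WithLp.equiv 2 (Fin m → ℝ) g) ⬝ᵥ ((B * B) *ᵥ (WithLp.equiv 2 (Fin m → ℝ) g))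
        - 2 * ((WithLp.equiv 2 (Fin m → ℝ) g) ⬝ᵥ (B *ᵥ (WithLp.equiv 2 (Fin m → ℝ) g)))
        + ‖g‖ ^ 2 := by
  rw [norm_sub_sq_real, aux_inner_toEuclideanLin, aux_norm_toEuclideanLin_sq B hB]
  ring

lemma aux_opnorm_le_of_quadratic (T : EuclideanSpace ℝ (Fin m) →L[ℝ] EuclideanSpace ℝ (Fin m))
    (c : ℝ) (hc : 0 ≤ c)
    (hsym : ∀ u v, (inner ℝ (T u) v : ℝ) = inner ℝ u (T v))
    (hpos : ∀ v, 0 ≤ (inner ℝ v (T v) : ℝ))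
    (hbound : ∀ v, (inner ℝ v (T v) : ℝ) ≤ c * ‖v‖ ^ 2) : ‖T‖ ≤ c := by
  refine ContinuousLinearMap.opNorm_le_bound _ hc fun x => ?_
  by_cases hx : T x = 0
  · simpa [hx] using mul_nonneg hc (norm_nonneg x)
  have hTx : 0 < ‖T x‖ := norm_pos_iff.mpr hx
  have hx0 : x ≠ 0 := by rintro rfl; simp at hx
  have hxn : 0 < ‖x‖ := norm_pos_iff.mpr hx0
  set u : EuclideanSpace ℝ (Fin m) := (‖x‖ / ‖T x‖) • T x with hu
  have hun : ‖u‖ = ‖x‖ := by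
    rw [hu, norm_smul, Real.norm_eq_abs, abs_div, abs_of_nonneg (norm_nonneg x),
      abs_of_nonneg (norm_nonneg (T x))]
    field_simp
  have hcomm : (inner ℝ x (T u) : ℝ) = inner ℝ u (T x) := by
    rw [← hsym u x]
    exact real_inner_comm _ _
  have hpol : (inner ℝ u (T x) : ℝ) =
      ((inner ℝ (u + x) (T (u + x)) : ℝ) - (inner ℝ (u - x) (T (u - x)) : ℝ)) / 4 := by
    simp only [map_add, map_sub, inner_add_left, inner_add_right, inner_sub_left,
      inner_sub_right]
    rw [show (inner ℝ x (T u) : ℝ) = inner ℝ u (T x) from hcomm]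
    ring
  have hval : (inner ℝ u (T x) : ℝ) = ‖x‖ * ‖T x‖ := by
    rw [hu, real_inner_smul_left, real_inner_self_eq_norm_sq]
    field_simp
  have h1 := hbound (u + x)
  have h2 := hpos (u - x)
  have h3 : ‖u + x‖ ^ 2 ≤ (2 * ‖x‖) ^ 2 := by
    have h4 := norm_add_le u x
    rw [hun] at h4
    nlinarith [norm_nonneg (u + x)]
  have hle : ‖x‖ * ‖T x‖ ≤ c * ‖x‖ ^ 2 := by
    rw [← hval, hpol]
    nlinarith
  nlinarith

end Aux

lemma aux_entry_bound (mm kk : ℕ) (Q : Fin mm → Fin kk → ℝ) (i j : Fin mm) :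
    |((Matrix.of Q) * (Matrix.of Q)ᵀ) i j| ≤
      (2 + ((Matrix.of Q) * (Matrix.of Q)ᵀ * ((Matrix.of Q) * (Matrix.of Q)ᵀ)) i i
        + ((Matrix.of Q) * (Matrix.of Q)ᵀ * ((Matrix.of Q) * (Matrix.of Q)ᵀ)) j j) / 4 := by
  set P := (Matrix.of Q) * (Matrix.of Q)ᵀ with hP
  have hPe : ∀ a b, P a b = ∑ l, Q a l * Q b l := by
    intro a b; simp [hP, Matrix.mul_apply]
  have hPsym : ∀ a b, P a b = P b a := by
    intro a b; rw [hPe, hPe]; exact Finset.sum_congr rfl fun l _ => mul_comm _ _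
  have hb : |P i j| ≤ (P i i + P j j) / 2 := by
    rw [hPe i j, hPe i i, hPe j j]
    calc |∑ l, Q i l * Q j l| ≤ ∑ l, |Q i l * Q j l| := Finset.abs_sum_le_sum_abs _ _
      _ ≤ ∑ l, (Q i l * Q i l + Q j l * Q j l) / 2 := by
          refine Finset.sum_le_sum fun l _ => ?_
          rw [abs_mul]
          nlinarith [sq_nonneg (|Q i l| - |Q j l|), abs_nonneg (Q i l), abs_nonneg (Q j l),
            sq_abs (Q i l), sq_abs (Q j l)]
      _ = ((∑ l, Q i l * Q i l) + ∑ l, Q j l * Q j l) / 2 := by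
          rw [← Finset.sum_div, Finset.sum_add_distrib]
  have hd : ∀ a : Fin mm, P a a ≤ (1 + (P * P) a a) / 2 := by
    intro a
    have h1 : (P * P) a a = ∑ l, P a l * P a l := by
      rw [Matrix.mul_apply]
      exact Finset.sum_congr rfl fun l _ => by rw [hPsym l a]
    have h2 : P a a * P a a ≤ (P * P) a a := by
      rw [h1]
      exact Finset.single_le_sum (f := fun l => P a l * P a l)
        (fun l _ => mul_self_nonneg _) (Finset.mem_univ a)
    nlinarith [sq_nonneg (P a a - 1)]
  have hdi := hd i
  have hdj := hd j
  linarith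

lemma aux_main {α : Type*} [MeasurableSpace α] (μ : Measure α) [IsProbabilityMeasure μ] {m : ℕ}
    (P : α → Matrix (Fin m) (Fin m) ℝ) (hPsym : ∀ a, (P a)ᵀ = P a)
    (hintP : ∀ i j, Integrable (fun a => P a i j) μ)
    (hint2 : ∀ i j, Integrable (fun a => (P a * P a) i j) μ)
    (hI : (Matrix.of fun i j => ∫ a, P a i j ∂μ) = 1)
    (ω : ℝ) (hω : 0 ≤ ω) :
    (∀ g : EuclideanSpace ℝ (Fin m),
        ∫ a, ‖g - Matrix.toEuclideanLin (P a) g‖ ^ 2 ∂μ ≤ ω * ‖g‖ ^ 2) ↔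
      ‖Matrix.toEuclideanCLM (𝕜 := ℝ) (n := Fin m)
        (Matrix.of fun i j => ∫ a, (P a * P a) i j ∂μ)‖ ≤ ω + 1 := by
  set S : Matrix (Fin m) (Fin m) ℝ := Matrix.of fun i j => ∫ a, (P a * P a) i j ∂μ with hS
  set T := Matrix.toEuclideanCLM (𝕜 := ℝ) (n := Fin m) S with hT
  have hTapp : ∀ v : EuclideanSpace ℝ (Fin m), T v = Matrix.toEuclideanLin S v := fun v => rfl
  have hP2sym : ∀ a, (P a * P a)ᵀ = P a * P a := fun a => by
    rw [Matrix.transpose_mul, hPsym]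
  have hSsym : Sᵀ = S := by
    ext i j
    simp only [hS, Matrix.transpose_apply, Matrix.of_apply]
    refine integral_congr_ae (Filter.Eventually.of_forall fun a => ?_)
    show (P a * P a) j i = (P a * P a) i j
    nth_rewrite 1 [← hP2sym a]
    rw [Matrix.transpose_apply]
  have hinner : ∀ v : EuclideanSpace ℝ (Fin m), (inner ℝ v (T v) : ℝ) =
      (WithLp.equiv 2 (Fin m → ℝ) v) ⬝ᵥ (S *ᵥ (WithLp.equiv 2 (Fin m → ℝ) v)) := by
    intro v; rw [hTapp, aux_inner_toEuclideanLin]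
  have hkey : ∀ g : EuclideanSpace ℝ (Fin m),
      ∫ a, ‖g - Matrix.toEuclideanLin (P a) g‖ ^ 2 ∂μ = (inner ℝ g (T g) : ℝ) - ‖g‖ ^ 2 := by
    intro g
    set g' := WithLp.equiv 2 (Fin m → ℝ) g with hg'
    have hf1 : Integrable (fun a => g' ⬝ᵥ ((P a * P a) *ᵥ g')) μ :=
      aux_integrable_dot _ hint2 g' g'
    have hf2 : Integrable (fun a => g' ⬝ᵥ (P a *ᵥ g')) μ :=
      aux_integrable_dot _ hintP g' g'
    have hgg : g' ⬝ᵥ g' = ‖g‖ ^ 2 := by rw [← real_inner_self_eq_norm_sq, aux_inner_eq_dot]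
    have e2 : ∫ a, g' ⬝ᵥ ((P a * P a) *ᵥ g') ∂μ = g' ⬝ᵥ (S *ᵥ g') :=
      aux_integral_dot _ hint2 g' g'
    have e3 : ∫ a, g' ⬝ᵥ (P a *ᵥ g') ∂μ
        = g' ⬝ᵥ ((Matrix.of fun i j => ∫ a, P a i j ∂μ) *ᵥ g') :=
      aux_integral_dot _ hintP g' g'
    rw [hI] at e3
    calc ∫ a, ‖g - Matrix.toEuclideanLin (P a) g‖ ^ 2 ∂μ
        = ∫ a, (g' ⬝ᵥ ((P a * P a) *ᵥ g') - 2 * (g' ⬝ᵥ (P a *ᵥ g')) + ‖g‖ ^ 2) ∂μ := by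
          refine integral_congr_ae (Filter.Eventually.of_forall fun a => ?_)
          exact aux_norm_sub_sq (P a) (hPsym a) g
      _ = (∫ a, (g' ⬝ᵥ ((P a * P a) *ᵥ g') - 2 * (g' ⬝ᵥ (P a *ᵥ g'))) ∂μ)
            + ∫ _a, (‖g‖ ^ 2 : ℝ) ∂μ :=
          integral_add (hf1.sub (hf2.const_mul 2)) (integrable_const _)
      _ = (∫ a, g' ⬝ᵥ ((P a * P a) *ᵥ g') ∂μ) - (∫ a, 2 * (g' ⬝ᵥ (P a *ᵥ g')) ∂μ) + ‖g‖ ^ 2 := by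
          rw [integral_sub hf1 (hf2.const_mul 2)]
          simp
      _ = (g' ⬝ᵥ (S *ᵥ g')) - 2 * (g' ⬝ᵥ ((1 : Matrix (Fin m) (Fin m) ℝ) *ᵥ g')) + ‖g‖ ^ 2 := by
          rw [integral_const_mul, e2, e3]
      _ = (inner ℝ g (T g) : ℝ) - ‖g‖ ^ 2 := by
          rw [hinner, Matrix.one_mulVec, hgg]; ring
  have hpos : ∀ v : EuclideanSpace ℝ (Fin m), 0 ≤ (inner ℝ v (T v) : ℝ) := by
    intro v
    have e2 : ∫ a, (WithLp.equiv 2 (Fin m → ℝ) v) ⬝ᵥ ((P a * P a) *ᵥ (WithLp.equiv 2 (Fin m → ℝ) v)) ∂μ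
        = (WithLp.equiv 2 (Fin m → ℝ) v) ⬝ᵥ (S *ᵥ (WithLp.equiv 2 (Fin m → ℝ) v)) :=
      aux_integral_dot _ hint2 _ _
    rw [hinner, ← e2]
    refine integral_nonneg fun a => ?_
    rw [← aux_norm_toEuclideanLin_sq (P a) (hPsym a) v]
    positivity
  have hsym : ∀ u v : EuclideanSpace ℝ (Fin m), (inner ℝ (T u) v : ℝ) = inner ℝ u (T v) := by
    intro u v
    rw [real_inner_comm, hTapp, hTapp, aux_inner_toEuclideanLin, aux_inner_toEuclideanLin]
    set u' := WithLp.equiv 2 (Fin m → ℝ) u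
    set v' := WithLp.equiv 2 (Fin m → ℝ) v
    have hv : v' ᵥ* S = S *ᵥ v' := by
      nth_rewrite 1 [← hSsym]
      exact Matrix.vecMul_transpose S v'
    rw [dotProduct_mulVec v' S u', hv, dotProduct_comm]
  constructor
  · intro h
    refine aux_opnorm_le_of_quadratic T (ω + 1) (by linarith) hsym hpos fun v => ?_
    have h1 := h v
    rw [hkey v] at h1
    linarith
  · intro h g
    rw [hkey g]
    have h1 : (inner ℝ g (T g) : ℝ) ≤ ‖g‖ * ‖T g‖ := real_inner_le_norm _ _
    have h2 := T.le_opNorm g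
    have h3 : (0:ℝ) ≤ ‖g‖ := norm_nonneg g
    have h4 : (0:ℝ) ≤ ‖g‖ ^ 2 := sq_nonneg _
    have h5 : ‖g‖ * ‖T g‖ ≤ ‖g‖ * (‖T‖ * ‖g‖) := mul_le_mul_of_nonneg_left h2 h3
    have h6 : ‖T‖ * ‖g‖ ^ 2 ≤ (ω + 1) * ‖g‖ ^ 2 := mul_le_mul_of_nonneg_right h h4
    nlinarith

/-- For a distribution `𝒬` on real `m × k` matrices with `E[Q Qᵀ] = I` and
integrable entries of `Q Qᵀ Q Qᵀ`, the `ω`-unbiased compressor condition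
`E[‖g − Q Qᵀ g‖²] ≤ ω ‖g‖²` for all `g` is equivalent to `‖E[Q Qᵀ Q Qᵀ]‖ ≤ ω + 1`. -/
theorem omega_unbiased_iff_Q_norm (m k : ℕ) (ω : ℝ) (hω : 0 ≤ ω)
    (𝒬 : Measure (Fin m → Fin k → ℝ)) [IsProbabilityMeasure 𝒬]
    (hI : (Matrix.of fun i j => ∫ Q, ((Matrix.of Q) * (Matrix.of Q)ᵀ) i j ∂𝒬) =
      (1 : Matrix (Fin m) (Fin m) ℝ))
    (hint : ∀ i j, Integrable
      (fun Q => ((Matrix.of Q) * (Matrix.of Q)ᵀ * ((Matrix.of Q) * (Matrix.of Q)ᵀ)) i j) 𝒬) :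
    (∀ g : EuclideanSpace ℝ (Fin m),
        ∫ Q, ‖g - Matrix.toEuclideanLin ((Matrix.of Q) * (Matrix.of Q)ᵀ) g‖ ^ 2 ∂𝒬 ≤
          ω * ‖g‖ ^ 2) ↔
      opNorm (Matrix.of fun i j =>
          ∫ Q, ((Matrix.of Q) * (Matrix.of Q)ᵀ * ((Matrix.of Q) * (Matrix.of Q)ᵀ)) i j ∂𝒬) ≤
        ω + 1 := by
  have hPsym : ∀ Q : Fin m → Fin k → ℝ,
      ((Matrix.of Q) * (Matrix.of Q)ᵀ)ᵀ = (Matrix.of Q) * (Matrix.of Q)ᵀ := by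
    intro Q; rw [Matrix.transpose_mul, Matrix.transpose_transpose]
  have hintP : ∀ i j, Integrable (fun Q => ((Matrix.of Q) * (Matrix.of Q)ᵀ) i j) 𝒬 := by
    intro i j
    have hmeas : AEStronglyMeasurable
        (fun Q : Fin m → Fin k → ℝ => ((Matrix.of Q) * (Matrix.of Q)ᵀ) i j) 𝒬 := by
      have hfe : (fun Q : Fin m → Fin k → ℝ => ((Matrix.of Q) * (Matrix.of Q)ᵀ) i j)
          = fun Q => ∑ l, Q i l * Q j l := by
        funext Q; simp [Matrix.mul_apply]
      rw [hfe]
      exact (Finset.measurable_sum _ fun l _ =>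
        ((measurable_pi_apply l).comp (measurable_pi_apply i)).mul
          ((measurable_pi_apply l).comp (measurable_pi_apply j))).aestronglyMeasurable
    have hbnd : Integrable (fun Q : Fin m → Fin k → ℝ =>
        (2 + ((Matrix.of Q) * (Matrix.of Q)ᵀ * ((Matrix.of Q) * (Matrix.of Q)ᵀ)) i i
          + ((Matrix.of Q) * (Matrix.of Q)ᵀ * ((Matrix.of Q) * (Matrix.of Q)ᵀ)) j j) / 4) 𝒬 :=
      (((integrable_const (2:ℝ)).add (hint i i)).add (hint j j)).div_const 4
    refine hbnd.mono' hmeas (Filter.Eventually.of_forall fun Q => ?_)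
    rw [Real.norm_eq_abs]
    exact aux_entry_bound m k Q i j
  exact aux_main 𝒬 (fun Q => (Matrix.of Q) * (Matrix.of Q)ᵀ) hPsym hintP hint hI ω hω
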